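/- Exact stationary state for α = 2, λ = 1 in terms of integral sine and integral cosine: let b > 0, c > 0 with b² > 4c, and set k₁ = (b − √(b² − 4c))/(2c) and k₂ = (b + √(b² − 4c))/(2c), so that 1 + b·κ + c·κ² = c·(κ + k₁)·(κ + k₂) and k₁ ≠ k₂. Then for every real x > 0, ∫₀^∞ cos(κ·x)/(1 + b·κ + c·κ²) dκ = [ ci(k₂·x)·cos(k₂·x) − ci(k₁·x)·cos(k₁·x) + si(k₂·x)·sin(k₂·x) − si(k₁·x)·sin(k₁·x) ] / ( c·(k₂ − k₁) ). -/

import Mathlib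

open MeasureTheory Set Filter intervalIntegral

lemma subst_lemma (k x T : ℝ) (hk : 0 < k) (hx : 0 < x) (hT : 0 ≤ T) :
    ∫ κ in (0:ℝ)..T, Real.cos (κ * x) / (κ + k)
      = Real.cos (k * x) * (∫ u in (k * x)..(x * T + k * x), Real.cos u / u)
        + Real.sin (k * x) * (∫ u in (k * x)..(x * T + k * x), Real.sin u / u) := by
  have huIcc : uIcc (0:ℝ) T = Icc 0 T := uIcc_of_le hT
  have hkx : 0 < k * x := mul_pos hk hx
  have h1 : ∫ κ in (0:ℝ)..T, Real.cos (κ * x) / (κ + k)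
      = ∫ κ in (0:ℝ)..T, x * ((fun u => Real.cos (u - k * x) / u) (x * κ + k * x)) := by
    apply intervalIntegral.integral_congr
    intro κ hκ
    rw [huIcc] at hκ
    have hκ0 : 0 ≤ κ := hκ.1
    have hden : κ + k > 0 := by linarith
    have hden2 : x * κ + k * x > 0 := by nlinarith
    simp only
    have : x * κ + k * x - k * x = κ * x := by ring
    rw [this]
    field_simp
  rw [h1, intervalIntegral.integral_const_mul,
    intervalIntegral.integral_comp_mul_add (fun u => Real.cos (u - k * x) / u) (ne_of_gt hx) (k * x)]
  have hx0 : x * 0 + k * x = k * x := by ring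
  rw [hx0, smul_eq_mul, ← mul_assoc, mul_inv_cancel₀ (ne_of_gt hx), one_mul]
  have huIcc2 : uIcc (k * x) (x * T + k * x) = Icc (k * x) (x * T + k * x) :=
    uIcc_of_le (by nlinarith)
  have h2 : ∫ u in (k * x)..(x * T + k * x), Real.cos (u - k * x) / u
      = ∫ u in (k * x)..(x * T + k * x),
          (Real.cos (k * x) * (Real.cos u / u) + Real.sin (k * x) * (Real.sin u / u)) := by
    apply intervalIntegral.integral_congr
    intro u hu
    rw [huIcc2] at hu
    have hu0 : u ≠ 0 := ne_of_gt (lt_of_lt_of_le hkx hu.1)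
    show Real.cos (u - k * x) / u = _
    rw [Real.cos_sub]
    field_simp
  rw [h2]
  have hcos : IntervalIntegrable (fun u => Real.cos u / u) volume (k * x) (x * T + k * x) := by
    apply ContinuousOn.intervalIntegrable
    apply Real.continuous_cos.continuousOn.div continuousOn_id
    intro u hu
    rw [huIcc2] at hu
    exact ne_of_gt (lt_of_lt_of_le hkx hu.1)
  have hsin : IntervalIntegrable (fun u => Real.sin u / u) volume (k * x) (x * T + k * x) := by
    apply ContinuousOn.intervalIntegrable
    apply Real.continuous_sin.continuousOn.div continuousOn_id
    intro u hu
    rw [huIcc2] at hu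
    exact ne_of_gt (lt_of_lt_of_le hkx hu.1)
  rw [intervalIntegral.integral_add (hcos.const_mul _) (hsin.const_mul _),
    intervalIntegral.integral_const_mul, intervalIntegral.integral_const_mul]

theorem stationary_state_alpha2_lambda1
    (b c : ℝ) (hb : 0 < b) (hc : 0 < c) (hdisc : 4 * c < b ^ 2)
    (k₁ k₂ : ℝ)
    (hk₁ : k₁ = (b - Real.sqrt (b ^ 2 - 4 * c)) / (2 * c))
    (hk₂ : k₂ = (b + Real.sqrt (b ^ 2 - 4 * c)) / (2 * c))
    (x : ℝ) (hx : 0 < x)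
    (Si₁ Ci₁ Si₂ Ci₂ : ℝ)
    (hSi₁ : Tendsto (fun T : ℝ => ∫ y in (k₁ * x)..T, Real.sin y / y) atTop (nhds (-Si₁)))
    (hCi₁ : Tendsto (fun T : ℝ => ∫ y in (k₁ * x)..T, Real.cos y / y) atTop (nhds (-Ci₁)))
    (hSi₂ : Tendsto (fun T : ℝ => ∫ y in (k₂ * x)..T, Real.sin y / y) atTop (nhds (-Si₂)))
    (hCi₂ : Tendsto (fun T : ℝ => ∫ y in (k₂ * x)..T, Real.cos y / y) atTop (nhds (-Ci₂))) :
    ∫ κ in Ioi (0 : ℝ), Real.cos (κ * x) / (1 + b * κ + c * κ ^ 2)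
      = (Ci₂ * Real.cos (k₂ * x) - Ci₁ * Real.cos (k₁ * x)
          + Si₂ * Real.sin (k₂ * x) - Si₁ * Real.sin (k₁ * x)) / (c * (k₂ - k₁)) := by
  set s := Real.sqrt (b ^ 2 - 4 * c) with hs_def
  have hs2 : s ^ 2 = b ^ 2 - 4 * c := Real.sq_sqrt (by linarith)
  have hs_pos : 0 < s := Real.sqrt_pos.mpr (by linarith)
  have hsb : s < b := by nlinarith [Real.sq_sqrt (show (0:ℝ) ≤ b ^ 2 - 4 * c by linarith)]
  have hk₁_pos : 0 < k₁ := by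
    rw [hk₁]
    have h1 : 0 < b - s := by linarith
    positivity
  have hk₂_pos : 0 < k₂ := by rw [hk₂]; positivity
  have hdiff : k₂ - k₁ = s / c := by rw [hk₁, hk₂]; field_simp; ring
  have hdiff_pos : 0 < k₂ - k₁ := by rw [hdiff]; positivity
  have hsum : k₁ + k₂ = b / c := by rw [hk₁, hk₂]; field_simp; ring
  have hprod : k₁ * k₂ = 1 / c := by
    rw [hk₁, hk₂]
    field_simp
    nlinarith [hs2]
  -- factorization
  have hfact : ∀ κ : ℝ, 1 + b * κ + c * κ ^ 2 = c * (κ + k₁) * (κ + k₂) := by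
    intro κ
    have h1 : c * (k₁ + k₂) = b := by rw [hsum]; field_simp
    have h2 : c * (k₁ * k₂) = 1 := by rw [hprod]; field_simp
    linear_combination -κ * h1 - h2
  -- positivity of denominator for κ ≥ 0
  have hden_pos : ∀ κ : ℝ, 0 ≤ κ → 0 < 1 + b * κ + c * κ ^ 2 := by
    intro κ hκ; nlinarith
  -- integrability on Ioi 0
  have hint : IntegrableOn (fun κ => Real.cos (κ * x) / (1 + b * κ + c * κ ^ 2))
      (Ioi (0:ℝ)) volume := by
    have hg : Integrable (fun κ : ℝ => (1 + (Real.sqrt c * κ) ^ 2)⁻¹) volume := by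
      rw [show (fun κ : ℝ => (1 + (Real.sqrt c * κ) ^ 2)⁻¹)
          = (fun y : ℝ => (1 + y ^ 2)⁻¹) ∘ (fun κ => Real.sqrt c * κ) from rfl]
      exact (integrable_comp_mul_left_iff (fun y : ℝ => (1 + y ^ 2)⁻¹)
        (ne_of_gt (Real.sqrt_pos.mpr hc))).mpr integrable_inv_one_add_sq
    apply Integrable.mono (hg.integrableOn)
    · apply ContinuousOn.aestronglyMeasurable _ measurableSet_Ioi
      apply ContinuousOn.div
      · exact (Real.continuous_cos.comp (continuous_mul_right x)).continuousOn
      · fun_prop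
      · intro κ hκ
        exact ne_of_gt (hden_pos κ (le_of_lt hκ))
    · filter_upwards [ae_restrict_mem measurableSet_Ioi] with κ hκ
      have hκ0 : 0 < κ := hκ
      have hd := hden_pos κ hκ0.le
      have hsq : (Real.sqrt c * κ) ^ 2 = c * κ ^ 2 := by
        rw [mul_pow, Real.sq_sqrt hc.le]
      have hb1 : (0:ℝ) < 1 + c * κ ^ 2 := by positivity
      rw [Real.norm_eq_abs, Real.norm_eq_abs, hsq, abs_div, abs_of_pos hd,
        abs_inv, abs_of_pos hb1, ← one_div]
      calc |Real.cos (κ * x)| / (1 + b * κ + c * κ ^ 2)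
            ≤ 1 / (1 + b * κ + c * κ ^ 2) := by
              gcongr
              exact Real.abs_cos_le_one _
        _ ≤ 1 / (1 + c * κ ^ 2) := by
              apply one_div_le_one_div_of_le hb1
              nlinarith
  -- limit 1
  have hlim1 : Tendsto (fun T : ℝ => ∫ κ in (0:ℝ)..T,
      Real.cos (κ * x) / (1 + b * κ + c * κ ^ 2)) atTop
      (nhds (∫ κ in Ioi (0:ℝ), Real.cos (κ * x) / (1 + b * κ + c * κ ^ 2))) :=
    intervalIntegral_tendsto_integral_Ioi 0 hint tendsto_id
  -- the finite-T identity
  have hTid : ∀ T : ℝ, 0 ≤ T → (∫ κ in (0:ℝ)..T, Real.cos (κ * x) / (1 + b * κ + c * κ ^ 2))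
      = (c * (k₂ - k₁))⁻¹ *
        ((Real.cos (k₁ * x) * (∫ u in (k₁ * x)..(x * T + k₁ * x), Real.cos u / u)
          + Real.sin (k₁ * x) * (∫ u in (k₁ * x)..(x * T + k₁ * x), Real.sin u / u))
        - (Real.cos (k₂ * x) * (∫ u in (k₂ * x)..(x * T + k₂ * x), Real.cos u / u)
          + Real.sin (k₂ * x) * (∫ u in (k₂ * x)..(x * T + k₂ * x), Real.sin u / u))) := by
    intro T hT
    have huIcc : uIcc (0:ℝ) T = Icc 0 T := uIcc_of_le hT
    have hstep : ∫ κ in (0:ℝ)..T, Real.cos (κ * x) / (1 + b * κ + c * κ ^ 2)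
        = ∫ κ in (0:ℝ)..T, (c * (k₂ - k₁))⁻¹ *
            (Real.cos (κ * x) / (κ + k₁) - Real.cos (κ * x) / (κ + k₂)) := by
      apply intervalIntegral.integral_congr
      intro κ hκ
      rw [huIcc] at hκ
      have h1 : κ + k₁ > 0 := by linarith [hκ.1]
      have h2 : κ + k₂ > 0 := by linarith [hκ.1]
      show Real.cos (κ * x) / (1 + b * κ + c * κ ^ 2) = _
      rw [hfact κ]
      field_simp
      ring
    rw [hstep, intervalIntegral.integral_const_mul]
    congr 1
    have hi1 : IntervalIntegrable (fun κ => Real.cos (κ * x) / (κ + k₁)) volume 0 T := by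
      apply ContinuousOn.intervalIntegrable
      apply ContinuousOn.div
      · exact (Real.continuous_cos.comp (continuous_mul_right x)).continuousOn
      · fun_prop
      · intro κ hκ; rw [huIcc] at hκ; have := hκ.1; positivity
    have hi2 : IntervalIntegrable (fun κ => Real.cos (κ * x) / (κ + k₂)) volume 0 T := by
      apply ContinuousOn.intervalIntegrable
      apply ContinuousOn.div
      · exact (Real.continuous_cos.comp (continuous_mul_right x)).continuousOn
      · fun_prop
      · intro κ hκ; rw [huIcc] at hκ; have := hκ.1; positivity
    rw [intervalIntegral.integral_sub hi1 hi2,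
      subst_lemma k₁ x T hk₁_pos hx hT, subst_lemma k₂ x T hk₂_pos hx hT]
  -- limit 2
  have haff : ∀ k : ℝ, Tendsto (fun T : ℝ => x * T + k * x) atTop atTop := by
    intro k
    exact tendsto_atTop_add_const_right _ _ (tendsto_id.const_mul_atTop hx)
  have hC1 := hCi₁.comp (haff k₁)
  have hS1 := hSi₁.comp (haff k₁)
  have hC2 := hCi₂.comp (haff k₂)
  have hS2 := hSi₂.comp (haff k₂)
  have hlim2 : Tendsto (fun T : ℝ => (c * (k₂ - k₁))⁻¹ *
        ((Real.cos (k₁ * x) * (∫ u in (k₁ * x)..(x * T + k₁ * x), Real.cos u / u)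
          + Real.sin (k₁ * x) * (∫ u in (k₁ * x)..(x * T + k₁ * x), Real.sin u / u))
        - (Real.cos (k₂ * x) * (∫ u in (k₂ * x)..(x * T + k₂ * x), Real.cos u / u)
          + Real.sin (k₂ * x) * (∫ u in (k₂ * x)..(x * T + k₂ * x), Real.sin u / u))))
      atTop (nhds ((Ci₂ * Real.cos (k₂ * x) - Ci₁ * Real.cos (k₁ * x)
          + Si₂ * Real.sin (k₂ * x) - Si₁ * Real.sin (k₁ * x)) / (c * (k₂ - k₁)))) := by
    have := (((hC1.const_mul (Real.cos (k₁ * x))).add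
        (hS1.const_mul (Real.sin (k₁ * x)))).sub
        ((hC2.const_mul (Real.cos (k₂ * x))).add
        (hS2.const_mul (Real.sin (k₂ * x))))).const_mul (c * (k₂ - k₁))⁻¹
    convert this using 2
    · rfl
    ring
  have hlim1' : Tendsto (fun T : ℝ => ∫ κ in (0:ℝ)..T,
      Real.cos (κ * x) / (1 + b * κ + c * κ ^ 2)) atTop
      (nhds ((Ci₂ * Real.cos (k₂ * x) - Ci₁ * Real.cos (k₁ * x)
          + Si₂ * Real.sin (k₂ * x) - Si₁ * Real.sin (k₁ * x)) / (c * (k₂ - k₁)))) := by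
    apply hlim2.congr'
    filter_upwards [eventually_ge_atTop (0:ℝ)] with T hT
    exact (hTid T hT).symm
  exact tendsto_nhds_unique hlim1 hlim1'
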